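/- Let α, δ ∈ ℝ, β > 0, j ∈ ℕ, and let λ ≥ 0 satisfy λ = 0 if α² + 3βδ > 0 and λ > 2√(−(α² + 3βδ))/(3β) if α² + 3βδ ≤ 0. Define γ₁(m) := (α − √(3β²m² + α² + 3βδ))/(3β) + i·m for m ∈ [λ, ∞), and let τ(m) := i·ω(γ₁(m)), which is real-valued, with derivative τ′. Then there exists a constant c > 0, depending only on α, β, δ, λ, j, such that for every measurable function h : ℝ → ℂ, ∫_λ^∞ |γ₁(m)|^{2j} |h(τ(m))|² (τ′(m))² dm ≤ c ∫_ℝ (1 + σ²)^{(j+1)/3} |h(σ)|² dσ. -/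

import Mathlib

set_option maxHeartbeats 1000000


open MeasureTheory

/-- The dispersion symbol `ω(k) = -iβk³ + iαk² + iδk`. -/
noncomputable def omegaHNLS (α β δ : ℝ) (k : ℂ) : ℂ :=
  -Complex.I * (β : ℂ) * k ^ 3 + Complex.I * (α : ℂ) * k ^ 2 + Complex.I * (δ : ℂ) * k

/-- Parametrization of the left branch of `∂D⁺`:
`γ₁(m) = (α − √(3β²m² + α² + 3βδ))/(3β) + i m`. -/
noncomputable def gammaOne (α β δ : ℝ) (m : ℝ) : ℂ :=
  (((α - Real.sqrt (3 * β ^ 2 * m ^ 2 + α ^ 2 + 3 * β * δ)) / (3 * β) : ℝ) : ℂ)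
    + Complex.I * (m : ℂ)

/-- The (real-valued) map `τ(m) = i·ω(γ₁(m))`, realized as the real part of `i·ω(γ₁(m))`. -/
noncomputable def tauGammaOne (α β δ : ℝ) (m : ℝ) : ℝ :=
  (Complex.I * omegaHNLS α β δ (gammaOne α β δ m)).re

/-! ### Auxiliary constants -/

noncomputable def KcHNLS (α β δ : ℝ) : ℝ := (2 * α ^ 2 + 3 * |α ^ 2 + 3 * β * δ| + 5) / (9 * β ^ 2)

noncomputable def C2HNLS (α β δ : ℝ) : ℝ :=
  (6 * |α ^ 2 + 3 * β * δ| * Real.sqrt (6 * |α ^ 2 + 3 * β * δ|) + |2 * α ^ 3 + 9 * α * β * δ|) / 7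

noncomputable def C3HNLS (α β δ : ℝ) : ℝ := 32 * β ^ 4 + 2 * (C2HNLS α β δ) ^ 2

noncomputable def DcHNLS (α β δ : ℝ) : ℝ :=
  4 * (KcHNLS α β δ) ^ 3 * (1 + C3HNLS α β δ) + (10 / β) ^ 3 * C3HNLS α β δ + 1

lemma KcHNLS_nonneg (α β δ : ℝ) : 0 ≤ KcHNLS α β δ :=
  div_nonneg (by positivity) (by positivity)

lemma C2HNLS_nonneg (α β δ : ℝ) : 0 ≤ C2HNLS α β δ := by
  unfold C2HNLS; positivity

lemma C3HNLS_nonneg (α β δ : ℝ) : 0 ≤ C3HNLS α β δ := by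
  unfold C3HNLS; positivity

lemma DcHNLS_one_le (α β δ : ℝ) (hβ : 0 < β) : 1 ≤ DcHNLS α β δ := by
  unfold DcHNLS
  have h1 : 0 ≤ 4 * (KcHNLS α β δ) ^ 3 * (1 + C3HNLS α β δ) := by
    apply mul_nonneg (mul_nonneg (by norm_num) (pow_nonneg (KcHNLS_nonneg α β δ) 3))
    linarith [C3HNLS_nonneg α β δ]
  have h2 : 0 ≤ (10 / β) ^ 3 * C3HNLS α β δ := by
    apply mul_nonneg (pow_nonneg (by positivity) 3) (C3HNLS_nonneg α β δ)
  linarith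

/-! ### The explicit formula for `τ` and its derivative -/

lemma tauGammaOne_eq (α β δ m : ℝ) :
    tauGammaOne α β δ m =
      β * (((α - Real.sqrt (3 * β ^ 2 * m ^ 2 + α ^ 2 + 3 * β * δ)) / (3 * β)) ^ 3
          - 3 * (((α - Real.sqrt (3 * β ^ 2 * m ^ 2 + α ^ 2 + 3 * β * δ)) / (3 * β)) * m ^ 2))
        - α * ((((α - Real.sqrt (3 * β ^ 2 * m ^ 2 + α ^ 2 + 3 * β * δ)) / (3 * β))) ^ 2 - m ^ 2)
        - δ * ((α - Real.sqrt (3 * β ^ 2 * m ^ 2 + α ^ 2 + 3 * β * δ)) / (3 * β)) := by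
  set x : ℝ := (α - Real.sqrt (3 * β ^ 2 * m ^ 2 + α ^ 2 + 3 * β * δ)) / (3 * β) with hx
  simp only [tauGammaOne, omegaHNLS, gammaOne, ← hx]
  simp [Complex.add_re, Complex.mul_re, Complex.mul_im, Complex.add_im, pow_succ]
  ring

lemma tau_hasDerivAt (α β δ : ℝ) (hβ : 0 < β) {m : ℝ}
    (hq : 0 < 3 * β ^ 2 * m ^ 2 + α ^ 2 + 3 * β * δ) :
    HasDerivAt (tauGammaOne α β δ)
      (2 * m * (4 * β ^ 2 * m ^ 2 + (α ^ 2 + 3 * β * δ))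
        / Real.sqrt (3 * β ^ 2 * m ^ 2 + α ^ 2 + 3 * β * δ)) m := by
  have hβ3 : (3 : ℝ) * β ≠ 0 := by positivity
  set s : ℝ := Real.sqrt (3 * β ^ 2 * m ^ 2 + α ^ 2 + 3 * β * δ) with hs
  have hspos : 0 < s := Real.sqrt_pos.mpr hq
  have hs2 : s ^ 2 = 3 * β ^ 2 * m ^ 2 + α ^ 2 + 3 * β * δ := Real.sq_sqrt hq.le
  have hm2 : m ^ 2 = (s ^ 2 - (α ^ 2 + 3 * β * δ)) / (3 * β ^ 2) := by
    field_simp; linarith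
  set X : ℝ → ℝ := fun t => (α - Real.sqrt (3 * β ^ 2 * t ^ 2 + α ^ 2 + 3 * β * δ)) / (3 * β)
    with hXdef
  have hfun : tauGammaOne α β δ
      = fun t => β * (X t ^ 3 - 3 * (X t * t ^ 2)) - α * (X t ^ 2 - t ^ 2) - δ * X t := by
    funext t
    rw [tauGammaOne_eq]
  have hinner : HasDerivAt (fun t : ℝ => 3 * β ^ 2 * t ^ 2 + α ^ 2 + 3 * β * δ)
      (6 * β ^ 2 * m) m := by
    have h := ((hasDerivAt_pow 2 m).const_mul (3 * β ^ 2)).add_const (α ^ 2 + 3 * β * δ)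
    have : (fun t : ℝ => 3 * β ^ 2 * t ^ 2 + (α ^ 2 + 3 * β * δ))
        = fun t : ℝ => 3 * β ^ 2 * t ^ 2 + α ^ 2 + 3 * β * δ := by funext t; ring
    rw [this] at h
    refine h.congr_deriv ?_
    push_cast; ring
  have hsq : HasDerivAt (fun t : ℝ => Real.sqrt (3 * β ^ 2 * t ^ 2 + α ^ 2 + 3 * β * δ))
      (6 * β ^ 2 * m / (2 * s)) m := hinner.sqrt (ne_of_gt hq)
  have hXd' : HasDerivAt X ((0 - 6 * β ^ 2 * m / (2 * s)) / (3 * β)) m :=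
    ((hasDerivAt_const m α).sub hsq).div_const (3 * β)
  have hXd : HasDerivAt X (-(β * m) / s) m := by
    convert hXd' using 1
    field_simp
    ring
  have hXm : X m = (α - s) / (3 * β) := rfl
  have h1 : α - 3 * β * X m = s := by rw [hXm]; field_simp; ring
  have h2 : 3 * β * X m ^ 2 - 2 * α * X m - δ = β * m ^ 2 := by
    rw [hXm, hm2]; field_simp; ring
  rw [hfun]
  have big := ((((hXd.pow 3).sub ((hXd.mul (hasDerivAt_pow 2 m)).const_mul 3)).const_mul β).sub
      (((hXd.pow 2).sub (hasDerivAt_pow 2 m)).const_mul α)).sub (hXd.const_mul δ)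
  refine big.congr_deriv ?_
  have hD : β * ((3 : ℕ) * X m ^ (3 - 1) * (-(β * m) / s)
        - 3 * (-(β * m) / s * m ^ 2 + X m * ((2 : ℕ) * m ^ (2 - 1))))
      - α * ((2 : ℕ) * X m ^ (2 - 1) * (-(β * m) / s) - (2 : ℕ) * m ^ (2 - 1))
      - δ * (-(β * m) / s)
      = (3 * β * X m ^ 2 - 2 * α * X m - δ - 3 * β * m ^ 2) * (-(β * m) / s)
        + 2 * m * (α - 3 * β * X m) := by
    push_cast; ring
  rw [hD, h1, h2]
  rw [show (4:ℝ) * β ^ 2 * m ^ 2 + (α ^ 2 + 3 * β * δ)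
      = β ^ 2 * m ^ 2 + s ^ 2 by rw [hs2]; ring]
  field_simp
  ring

lemma tau_val (α β δ : ℝ) (hβ : 0 < β) {m : ℝ}
    (hq : 0 < 3 * β ^ 2 * m ^ 2 + α ^ 2 + 3 * β * δ) :
    27 * β ^ 2 * tauGammaOne α β δ m
      = 8 * Real.sqrt (3 * β ^ 2 * m ^ 2 + α ^ 2 + 3 * β * δ) ^ 3
        - 6 * (α ^ 2 + 3 * β * δ) * Real.sqrt (3 * β ^ 2 * m ^ 2 + α ^ 2 + 3 * β * δ)
        - 2 * α ^ 3 - 9 * α * β * δ := by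
  have hβ3 : (3 : ℝ) * β ≠ 0 := by positivity
  set s : ℝ := Real.sqrt (3 * β ^ 2 * m ^ 2 + α ^ 2 + 3 * β * δ) with hs
  have hs2 : s ^ 2 = 3 * β ^ 2 * m ^ 2 + α ^ 2 + 3 * β * δ := Real.sq_sqrt hq.le
  have hm2 : m ^ 2 = (s ^ 2 - (α ^ 2 + 3 * β * δ)) / (3 * β ^ 2) := by
    field_simp; linarith
  rw [tauGammaOne_eq, ← hs, hm2]
  field_simp
  ring

/-- Young-type inequality: `b * s ≤ s³ + b^{3/2}`. -/
lemma young_bs {b s : ℝ} (hb : 0 ≤ b) (hs : 0 ≤ s) :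
    b * s ≤ s ^ 3 + b * Real.sqrt b := by
  rcases le_or_gt s (Real.sqrt b) with h | h
  · have : b * s ≤ b * Real.sqrt b := mul_le_mul_of_nonneg_left h hb
    nlinarith [pow_nonneg hs 3]
  · have hb2 : b < s ^ 2 := by
      nlinarith [Real.sq_sqrt hb, Real.sqrt_nonneg b]
    nlinarith [mul_nonneg hb (Real.sqrt_nonneg b)]

/-- The sixth power of `s = √(3β²m² + α² + 3βδ)` is controlled by `1 + τ(m)²`. -/
lemma sqrt_six_le (α β δ : ℝ) (hβ : 0 < β) {m : ℝ}
    (hq : 0 < 3 * β ^ 2 * m ^ 2 + α ^ 2 + 3 * β * δ) :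
    Real.sqrt (3 * β ^ 2 * m ^ 2 + α ^ 2 + 3 * β * δ) ^ 6
      ≤ C3HNLS α β δ * (1 + tauGammaOne α β δ m ^ 2) := by
  set s : ℝ := Real.sqrt (3 * β ^ 2 * m ^ 2 + α ^ 2 + 3 * β * δ) with hs
  set τ : ℝ := tauGammaOne α β δ m with hτ
  have hval := tau_val α β δ hβ hq
  rw [← hs, ← hτ] at hval
  have hs0 : 0 ≤ s := Real.sqrt_nonneg _
  have hy := young_bs (b := 6 * |α ^ 2 + 3 * β * δ|) (s := s) (by positivity) hs0
  have h8 : 8 * s ^ 3 ≤ 27 * β ^ 2 * |τ| + 6 * |α ^ 2 + 3 * β * δ| * s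
      + |2 * α ^ 3 + 9 * α * β * δ| := by
    have t1 : 27 * β ^ 2 * τ ≤ 27 * β ^ 2 * |τ| := by
      have := mul_nonneg (by positivity : (0:ℝ) ≤ 27 * β ^ 2) (abs_nonneg τ)
      nlinarith [le_abs_self τ, sq_nonneg β]
    have t2 : 6 * (α ^ 2 + 3 * β * δ) * s ≤ 6 * |α ^ 2 + 3 * β * δ| * s := by
      have := mul_le_mul_of_nonneg_right (le_abs_self (α ^ 2 + 3 * β * δ)) hs0
      nlinarith
    have t3 := le_abs_self (2 * α ^ 3 + 9 * α * β * δ)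
    have t4 := neg_abs_le (2 * α ^ 3 + 9 * α * β * δ)
    nlinarith [hval]
  have hP1 : s ^ 3 ≤ 4 * β ^ 2 * |τ| + C2HNLS α β δ := by
    have hnn := mul_nonneg (sq_nonneg β) (abs_nonneg τ)
    unfold C2HNLS
    nlinarith [h8, hy]
  calc s ^ 6 = (s ^ 3) ^ 2 := by ring
    _ ≤ (4 * β ^ 2 * |τ| + C2HNLS α β δ) ^ 2 := by
        apply pow_le_pow_left₀ (by positivity) hP1 2
    _ ≤ C3HNLS α β δ * (1 + τ ^ 2) := by
        unfold C3HNLS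
        nlinarith [sq_nonneg (4 * β ^ 2 * |τ| - C2HNLS α β δ), sq_abs τ, sq_nonneg τ,
          C2HNLS_nonneg α β δ, sq_nonneg (β ^ 2), sq_nonneg (β ^ 2 * τ)]

lemma gammaOne_sq_abs (α β δ m : ℝ) :
    ‖gammaOne α β δ m‖ ^ 2
      = ((α - Real.sqrt (3 * β ^ 2 * m ^ 2 + α ^ 2 + 3 * β * δ)) / (3 * β)) ^ 2 + m ^ 2 := by
  rw [Complex.sq_norm, Complex.normSq_apply]
  have hre : (gammaOne α β δ m).re
      = (α - Real.sqrt (3 * β ^ 2 * m ^ 2 + α ^ 2 + 3 * β * δ)) / (3 * β) := by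
    simp only [gammaOne, Complex.add_re, Complex.ofReal_re, Complex.mul_re, Complex.I_re,
      Complex.I_im, Complex.ofReal_im]
    ring
  have him : (gammaOne α β δ m).im = m := by
    simp only [gammaOne, Complex.add_im, Complex.ofReal_re, Complex.mul_im, Complex.I_re,
      Complex.I_im, Complex.ofReal_im]
    ring
  rw [hre, him]
  ring

/-- The derivative expression `τ′(m) = 2m(4β²m² + A)/s`. -/
noncomputable def TpHNLS (α β δ : ℝ) (m : ℝ) : ℝ :=
  2 * m * (4 * β ^ 2 * m ^ 2 + (α ^ 2 + 3 * β * δ))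
    / Real.sqrt (3 * β ^ 2 * m ^ 2 + α ^ 2 + 3 * β * δ)

lemma TpHNLS_nonneg (α β δ : ℝ) (hβ : 0 < β) {m : ℝ} (hm0 : 0 ≤ m)
    (hq : 0 < 3 * β ^ 2 * m ^ 2 + α ^ 2 + 3 * β * δ) :
    0 ≤ TpHNLS α β δ m := by
  unfold TpHNLS
  apply div_nonneg _ (Real.sqrt_nonneg _)
  have : 0 ≤ 4 * β ^ 2 * m ^ 2 + (α ^ 2 + 3 * β * δ) := by nlinarith [sq_nonneg (β * m)]
  nlinarith

lemma TpHNLS_pos (α β δ : ℝ) (hβ : 0 < β) {m : ℝ} (hm0 : 0 < m)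
    (hq : 0 < 3 * β ^ 2 * m ^ 2 + α ^ 2 + 3 * β * δ) :
    0 < TpHNLS α β δ m := by
  unfold TpHNLS
  apply div_pos _ (Real.sqrt_pos.mpr hq)
  have : 0 < 4 * β ^ 2 * m ^ 2 + (α ^ 2 + 3 * β * δ) := by nlinarith [sq_nonneg (β * m)]
  nlinarith

lemma TpHNLS_le (α β δ : ℝ) (hβ : 0 < β) {m : ℝ} (hm0 : 0 ≤ m)
    (hq : 0 < 3 * β ^ 2 * m ^ 2 + α ^ 2 + 3 * β * δ)
    (hAl : |α ^ 2 + 3 * β * δ| ≤ 3 * (3 * β ^ 2 * m ^ 2 + α ^ 2 + 3 * β * δ)) :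
    TpHNLS α β δ m ≤ (10 / β) * Real.sqrt (3 * β ^ 2 * m ^ 2 + α ^ 2 + 3 * β * δ) ^ 2 := by
  unfold TpHNLS
  set s : ℝ := Real.sqrt (3 * β ^ 2 * m ^ 2 + α ^ 2 + 3 * β * δ) with hs
  have hspos : 0 < s := Real.sqrt_pos.mpr hq
  have hs2 : s ^ 2 = 3 * β ^ 2 * m ^ 2 + α ^ 2 + 3 * β * δ := Real.sq_sqrt hq.le
  rw [show (4:ℝ) * β ^ 2 * m ^ 2 + (α ^ 2 + 3 * β * δ) = β ^ 2 * m ^ 2 + s ^ 2 by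
    rw [hs2]; ring]
  have hb2 : 3 * β ^ 2 * m ^ 2 ≤ 4 * s ^ 2 := by
    have h1 := neg_abs_le (α ^ 2 + 3 * β * δ)
    nlinarith [hs2, hAl]
  have hbm : β * m ≤ 2 * s := by nlinarith [hb2, hspos, hm0, hβ]
  rw [div_le_iff₀ hspos]
  have t1 : (β * m) * (β ^ 2 * m ^ 2 + s ^ 2) ≤ (2 * s) * (β ^ 2 * m ^ 2 + s ^ 2) :=
    mul_le_mul_of_nonneg_right hbm (by positivity)
  have t2 : s * (3 * β ^ 2 * m ^ 2) ≤ s * (4 * s ^ 2) :=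
    mul_le_mul_of_nonneg_left hb2 hspos.le
  rw [div_mul_eq_mul_div, div_mul_eq_mul_div, le_div_iff₀ hβ]
  nlinarith [t1, t2, pow_pos hspos 3]

lemma key_scalar (α β δ : ℝ) (hβ : 0 < β) (j : ℕ) {m : ℝ} (hm0 : 0 ≤ m)
    (hq : 0 < 3 * β ^ 2 * m ^ 2 + α ^ 2 + 3 * β * δ)
    (hAl : |α ^ 2 + 3 * β * δ| ≤ 3 * (3 * β ^ 2 * m ^ 2 + α ^ 2 + 3 * β * δ)) :
    ‖gammaOne α β δ m‖ ^ (2 * j) * TpHNLS α β δ m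
      ≤ DcHNLS α β δ ^ (j + 1) * (1 + tauGammaOne α β δ m ^ 2) ^ (((j : ℝ) + 1) / 3) := by
  set s : ℝ := Real.sqrt (3 * β ^ 2 * m ^ 2 + α ^ 2 + 3 * β * δ) with hs
  set τ : ℝ := tauGammaOne α β δ m with hτ
  have hspos : 0 < s := Real.sqrt_pos.mpr hq
  have hs2 : s ^ 2 = 3 * β ^ 2 * m ^ 2 + α ^ 2 + 3 * β * δ := Real.sq_sqrt hq.le
  have hs6 : s ^ 6 ≤ C3HNLS α β δ * (1 + τ ^ 2) := sqrt_six_le α β δ hβ hq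
  have hT0 : 0 ≤ TpHNLS α β δ m := TpHNLS_nonneg α β δ hβ hm0 hq
  have hT5 : TpHNLS α β δ m ≤ (10 / β) * s ^ 2 := TpHNLS_le α β δ hβ hm0 hq hAl
  have hb0 : (0:ℝ) ≤ 1 + τ ^ 2 := by positivity
  have hD1 : 1 ≤ DcHNLS α β δ := DcHNLS_one_le α β δ hβ
  have hD0 : 0 ≤ DcHNLS α β δ := by linarith
  -- cube bound for |γ₁|²
  have hXm2 : ‖gammaOne α β δ m‖ ^ 2 ≤ KcHNLS α β δ * (1 + s ^ 2) := by
    rw [gammaOne_sq_abs, ← hs]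
    have h9 : 9 * β ^ 2 * (((α - s) / (3 * β)) ^ 2) = (α - s) ^ 2 := by
      field_simp; ring
    have hK : 9 * β ^ 2 * KcHNLS α β δ = 2 * α ^ 2 + 3 * |α ^ 2 + 3 * β * δ| + 5 := by
      unfold KcHNLS; field_simp
    have hm2' : 3 * β ^ 2 * m ^ 2 = s ^ 2 - (α ^ 2 + 3 * β * δ) := by linarith [hs2]
    have h9b : 9 * β ^ 2 * ((((α - s) / (3 * β)) ^ 2) + m ^ 2)
        ≤ (2 * α ^ 2 + 3 * |α ^ 2 + 3 * β * δ| + 5) * (1 + s ^ 2) := by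
      nlinarith [h9, hm2', sq_nonneg (α + s), neg_abs_le (α ^ 2 + 3 * β * δ),
        le_abs_self (α ^ 2 + 3 * β * δ), sq_nonneg s, abs_nonneg (α ^ 2 + 3 * β * δ),
        sq_nonneg α]
    have h9pos : (0:ℝ) < 9 * β ^ 2 := by positivity
    calc ((α - s) / (3 * β)) ^ 2 + m ^ 2
        = 9 * β ^ 2 * ((((α - s) / (3 * β)) ^ 2) + m ^ 2) / (9 * β ^ 2) := by
          field_simp
      _ ≤ (2 * α ^ 2 + 3 * |α ^ 2 + 3 * β * δ| + 5) * (1 + s ^ 2) / (9 * β ^ 2) := by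
          exact (div_le_div_iff_of_pos_right h9pos).mpr h9b
      _ = KcHNLS α β δ * (1 + s ^ 2) := by unfold KcHNLS; ring
  have hcube1 : (‖gammaOne α β δ m‖ ^ 2) ^ 3
      ≤ KcHNLS α β δ ^ 3 * (1 + s ^ 2) ^ 3 := by
    rw [← mul_pow]
    exact pow_le_pow_left₀ (by positivity) hXm2 3
  have hcube2 : (1 + s ^ 2) ^ 3 ≤ 4 * (1 + s ^ 6) := by
    nlinarith [mul_nonneg (sq_nonneg (1 - s ^ 2)) (by positivity : (0:ℝ) ≤ 1 + s ^ 2)]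
  have hs6' : 1 + s ^ 6 ≤ (1 + C3HNLS α β δ) * (1 + τ ^ 2) := by
    nlinarith [hs6, C3HNLS_nonneg α β δ, sq_nonneg τ]
  have hK3 : 0 ≤ KcHNLS α β δ ^ 3 := pow_nonneg (KcHNLS_nonneg α β δ) 3
  have hCA : (‖gammaOne α β δ m‖ ^ 2) ^ 3 ≤ DcHNLS α β δ * (1 + τ ^ 2) := by
    have hDge : 4 * KcHNLS α β δ ^ 3 * (1 + C3HNLS α β δ) ≤ DcHNLS α β δ := by
      unfold DcHNLS
      have : 0 ≤ (10 / β) ^ 3 * C3HNLS α β δ :=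
        mul_nonneg (pow_nonneg (by positivity) 3) (C3HNLS_nonneg α β δ)
      linarith
    have e1 := mul_le_mul_of_nonneg_left hcube2 hK3
    have e2 := mul_le_mul_of_nonneg_left hs6' (by positivity : (0:ℝ) ≤ 4 * KcHNLS α β δ ^ 3)
    have e3 := mul_le_mul_of_nonneg_right hDge (by positivity : (0:ℝ) ≤ 1 + τ ^ 2)
    nlinarith [hcube1]
  have hT3 : TpHNLS α β δ m ^ 3 ≤ DcHNLS α β δ * (1 + τ ^ 2) := by
    have hC40 : (0:ℝ) ≤ (10 / β) ^ 3 := pow_nonneg (by positivity) 3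
    have e0 : TpHNLS α β δ m ^ 3 ≤ ((10 / β) * s ^ 2) ^ 3 := pow_le_pow_left₀ hT0 hT5 3
    have e1 : ((10 / β) * s ^ 2) ^ 3 = (10 / β) ^ 3 * s ^ 6 := by ring
    have e2 := mul_le_mul_of_nonneg_left hs6 hC40
    have hDge : (10 / β) ^ 3 * C3HNLS α β δ ≤ DcHNLS α β δ := by
      unfold DcHNLS
      have : 0 ≤ 4 * (KcHNLS α β δ) ^ 3 * (1 + C3HNLS α β δ) := by
        apply mul_nonneg (by positivity)
        linarith [C3HNLS_nonneg α β δ]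
      linarith
    have e3 := mul_le_mul_of_nonneg_right hDge (by positivity : (0:ℝ) ≤ 1 + τ ^ 2)
    nlinarith
  -- assemble via cube roots
  set a : ℝ := ‖gammaOne α β δ m‖ ^ (2 * j) * TpHNLS α β δ m with ha
  have ha0 : 0 ≤ a := mul_nonneg (pow_nonneg (norm_nonneg _) _) hT0
  have ha3 : a ^ 3 ≤ DcHNLS α β δ ^ (j + 1) * (1 + τ ^ 2) ^ (j + 1) := by
    have habs : ‖gammaOne α β δ m‖ ^ (2 * j)
        = (‖gammaOne α β δ m‖ ^ 2) ^ j := by rw [pow_mul]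
    calc a ^ 3 = ((‖gammaOne α β δ m‖ ^ 2) ^ 3) ^ j * TpHNLS α β δ m ^ 3 := by
          rw [ha, habs]; ring
      _ ≤ (DcHNLS α β δ * (1 + τ ^ 2)) ^ j * (DcHNLS α β δ * (1 + τ ^ 2)) := by
          apply mul_le_mul (pow_le_pow_left₀ (by positivity) hCA j) hT3
            (pow_nonneg hT0 3) (pow_nonneg (mul_nonneg hD0 hb0) j)
      _ = DcHNLS α β δ ^ (j + 1) * (1 + τ ^ 2) ^ (j + 1) := by rw [mul_pow]; ring
  have hDj1 : 1 ≤ DcHNLS α β δ ^ (j + 1) := by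
    calc (1:ℝ) = 1 ^ (j + 1) := by norm_num
      _ ≤ DcHNLS α β δ ^ (j + 1) := pow_le_pow_left₀ zero_le_one hD1 (j + 1)
  have hcb : ((a ^ (3:ℕ) : ℝ)) ^ ((1:ℝ)/3) = a := by
    rw [← Real.rpow_natCast a 3, ← Real.rpow_mul ha0]
    norm_num
  rw [← hcb]
  have step1 : ((a ^ (3:ℕ) : ℝ)) ^ ((1:ℝ)/3)
      ≤ (DcHNLS α β δ ^ (j + 1) * (1 + τ ^ 2) ^ (j + 1)) ^ ((1:ℝ)/3) :=
    Real.rpow_le_rpow (by positivity) ha3 (by norm_num)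
  have step2 : (DcHNLS α β δ ^ (j + 1) * (1 + τ ^ 2) ^ (j + 1)) ^ ((1:ℝ)/3)
      = (DcHNLS α β δ ^ (j + 1)) ^ ((1:ℝ)/3) * ((1 + τ ^ 2) ^ (j + 1)) ^ ((1:ℝ)/3) :=
    Real.mul_rpow (by positivity) (by positivity)
  have step3 : (DcHNLS α β δ ^ (j + 1) : ℝ) ^ ((1:ℝ)/3) ≤ DcHNLS α β δ ^ (j + 1) := by
    nth_rewrite 2 [← Real.rpow_one (DcHNLS α β δ ^ (j + 1))]
    exact Real.rpow_le_rpow_of_exponent_le hDj1 (by norm_num)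
  have step4 : (((1 + τ ^ 2) ^ (j + 1) : ℝ)) ^ ((1:ℝ)/3) = (1 + τ ^ 2) ^ (((j:ℝ) + 1) / 3) := by
    rw [← Real.rpow_natCast (1 + τ ^ 2) (j + 1), ← Real.rpow_mul hb0]
    congr 1
    push_cast
    ring
  calc ((a ^ (3:ℕ) : ℝ)) ^ ((1:ℝ)/3)
      ≤ (DcHNLS α β δ ^ (j + 1)) ^ ((1:ℝ)/3) * ((1 + τ ^ 2) ^ (j + 1)) ^ ((1:ℝ)/3) := by
        rw [← step2]; exact step1
    _ ≤ DcHNLS α β δ ^ (j + 1) * (1 + τ ^ 2) ^ (((j:ℝ) + 1) / 3) := by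
        rw [step4]
        exact mul_le_mul_of_nonneg_right step3 (Real.rpow_nonneg hb0 _)

/-- One-dimensional change of variables for the Lebesgue (lower) integral. -/
lemma lintegral_image_eq_lintegral_abs_deriv_mul' {s : Set ℝ} {f f' : ℝ → ℝ}
    (hs : MeasurableSet s) (hf' : ∀ x ∈ s, HasDerivWithinAt f (f' x) s x)
    (hf : Set.InjOn f s) (g : ℝ → ENNReal) :
    ∫⁻ x in f '' s, g x = ∫⁻ x in s, ENNReal.ofReal |f' x| * g (f x) := by
  simpa only [ContinuousLinearMap.det_toSpanSingleton] using
    MeasureTheory.lintegral_image_eq_lintegral_abs_det_fderiv_mul volume hs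
      (fun x hx => (hf' x hx).hasFDerivWithinAt) hf g

theorem gammaOne_change_of_variables_bound (α β δ : ℝ) (hβ : 0 < β) (j : ℕ) (lam : ℝ)
    (hlam0 : 0 ≤ lam)
    (hlam1 : 0 < α ^ 2 + 3 * β * δ → lam = 0)
    (hlam2 : α ^ 2 + 3 * β * δ ≤ 0 →
      2 * Real.sqrt (-(α ^ 2 + 3 * β * δ)) / (3 * β) < lam) :
    ∃ c > 0, ∀ h : ℝ → ℂ, Measurable h →
      (∫⁻ m in Set.Ici lam,
          ENNReal.ofReal
            (‖gammaOne α β δ m‖ ^ (2 * j) *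
              ‖h (tauGammaOne α β δ m)‖ ^ 2 * (deriv (tauGammaOne α β δ) m) ^ 2)) ≤
        ENNReal.ofReal c *
          ∫⁻ σ : ℝ, ENNReal.ofReal ((1 + σ ^ 2) ^ (((j : ℝ) + 1) / 3) * ‖h σ‖ ^ 2) := by
  have hD1 := DcHNLS_one_le α β δ hβ
  have hDpos : 0 < DcHNLS α β δ := by linarith
  refine ⟨DcHNLS α β δ ^ (j + 1), pow_pos hDpos _, fun h _hmeas => ?_⟩
  have hc0 : (0:ℝ) ≤ DcHNLS α β δ ^ (j + 1) := (pow_pos hDpos _).le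
  -- basic positivity facts along the ray
  have hqpos : ∀ m : ℝ, lam ≤ m → 0 < 3 * β ^ 2 * m ^ 2 + α ^ 2 + 3 * β * δ := by
    intro m hm
    have hm0 : 0 ≤ m := hlam0.trans hm
    have hml : lam ^ 2 ≤ m ^ 2 := by nlinarith
    rcases le_or_gt (α ^ 2 + 3 * β * δ) 0 with hA0 | hA0
    · have h2 := hlam2 hA0
      have h3 : 2 * Real.sqrt (-(α ^ 2 + 3 * β * δ)) < 3 * β * lam := by
        rw [div_lt_iff₀ (by positivity)] at h2; linarith
      have h4 : 4 * (-(α ^ 2 + 3 * β * δ)) < 9 * β ^ 2 * lam ^ 2 := by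
        nlinarith [Real.sq_sqrt (neg_nonneg.mpr hA0), Real.sqrt_nonneg (-(α ^ 2 + 3 * β * δ))]
      nlinarith [mul_le_mul_of_nonneg_left hml (sq_nonneg β)]
    · nlinarith [sq_nonneg (β * m)]
  have hAle : ∀ m : ℝ, lam ≤ m →
      |α ^ 2 + 3 * β * δ| ≤ 3 * (3 * β ^ 2 * m ^ 2 + α ^ 2 + 3 * β * δ) := by
    intro m hm
    have hm0 : 0 ≤ m := hlam0.trans hm
    have hml : lam ^ 2 ≤ m ^ 2 := by nlinarith
    rcases le_or_gt (α ^ 2 + 3 * β * δ) 0 with hA0 | hA0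
    · have h2 := hlam2 hA0
      have h3 : 2 * Real.sqrt (-(α ^ 2 + 3 * β * δ)) < 3 * β * lam := by
        rw [div_lt_iff₀ (by positivity)] at h2; linarith
      have h4 : 4 * (-(α ^ 2 + 3 * β * δ)) < 9 * β ^ 2 * lam ^ 2 := by
        nlinarith [Real.sq_sqrt (neg_nonneg.mpr hA0), Real.sqrt_nonneg (-(α ^ 2 + 3 * β * δ))]
      rw [abs_of_nonpos hA0]
      nlinarith [mul_le_mul_of_nonneg_left hml (sq_nonneg β)]
    · rw [abs_of_pos hA0]
      nlinarith [sq_nonneg (β * m)]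
  -- derivative facts
  have hHD : ∀ m ∈ Set.Ioi lam, HasDerivAt (tauGammaOne α β δ) (TpHNLS α β δ m) m := by
    intro m hm
    have := tau_hasDerivAt α β δ hβ (hqpos m (le_of_lt hm))
    unfold TpHNLS
    exact this
  have hcont : Continuous (tauGammaOne α β δ) := by
    unfold tauGammaOne omegaHNLS gammaOne
    fun_prop
  have hmono : StrictMonoOn (tauGammaOne α β δ) (Set.Ioi lam) := by
    apply strictMonoOn_of_deriv_pos (convex_Ioi lam) hcont.continuousOn
    intro x hx
    rw [interior_Ioi] at hx
    rw [(hHD x hx).deriv]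
    exact TpHNLS_pos α β δ hβ (lt_of_le_of_lt hlam0 hx) (hqpos x (le_of_lt hx))
  -- replace `Ici` by `Ioi`
  rw [← MeasureTheory.Measure.restrict_congr_set (MeasureTheory.Ioi_ae_eq_Ici (a := lam))]
  calc
    ∫⁻ m in Set.Ioi lam,
        ENNReal.ofReal
          (‖gammaOne α β δ m‖ ^ (2 * j) *
            ‖h (tauGammaOne α β δ m)‖ ^ 2 * (deriv (tauGammaOne α β δ) m) ^ 2)
      ≤ ∫⁻ m in Set.Ioi lam,
          ENNReal.ofReal |TpHNLS α β δ m| *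
            (ENNReal.ofReal (DcHNLS α β δ ^ (j + 1)) *
              ENNReal.ofReal
                ((1 + tauGammaOne α β δ m ^ 2) ^ (((j : ℝ) + 1) / 3)
                  * ‖h (tauGammaOne α β δ m)‖ ^ 2)) := by
        apply setLIntegral_mono' measurableSet_Ioi
        intro m hm
        have hq := hqpos m (le_of_lt hm)
        have hm0 : 0 ≤ m := hlam0.trans (le_of_lt hm)
        have hAl := hAle m (le_of_lt hm)
        have hT0 : 0 ≤ TpHNLS α β δ m := TpHNLS_nonneg α β δ hβ hm0 hq
        have hkey := key_scalar α β δ hβ j hm0 hq hAl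
        rw [show deriv (tauGammaOne α β δ) m = TpHNLS α β δ m from (hHD m hm).deriv]
        rw [abs_of_nonneg hT0, ← ENNReal.ofReal_mul hc0, ← ENNReal.ofReal_mul hT0]
        apply ENNReal.ofReal_le_ofReal
        have e1 : ‖gammaOne α β δ m‖ ^ (2 * j) *
              ‖h (tauGammaOne α β δ m)‖ ^ 2 * TpHNLS α β δ m ^ 2
            = (‖gammaOne α β δ m‖ ^ (2 * j) * TpHNLS α β δ m)
              * (TpHNLS α β δ m * ‖h (tauGammaOne α β δ m)‖ ^ 2) := by ring
        rw [e1]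
        calc (‖gammaOne α β δ m‖ ^ (2 * j) * TpHNLS α β δ m)
              * (TpHNLS α β δ m * ‖h (tauGammaOne α β δ m)‖ ^ 2)
            ≤ (DcHNLS α β δ ^ (j + 1) * (1 + tauGammaOne α β δ m ^ 2) ^ (((j : ℝ) + 1) / 3))
              * (TpHNLS α β δ m * ‖h (tauGammaOne α β δ m)‖ ^ 2) := by
              apply mul_le_mul_of_nonneg_right hkey (mul_nonneg hT0 (by positivity))
          _ = TpHNLS α β δ m *
              (DcHNLS α β δ ^ (j + 1) *
                ((1 + tauGammaOne α β δ m ^ 2) ^ (((j : ℝ) + 1) / 3)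
                  * ‖h (tauGammaOne α β δ m)‖ ^ 2)) := by ring
    _ = ENNReal.ofReal (DcHNLS α β δ ^ (j + 1)) *
          ∫⁻ m in Set.Ioi lam,
            ENNReal.ofReal |TpHNLS α β δ m| *
              ENNReal.ofReal
                ((1 + tauGammaOne α β δ m ^ 2) ^ (((j : ℝ) + 1) / 3)
                  * ‖h (tauGammaOne α β δ m)‖ ^ 2) := by
        rw [← lintegral_const_mul' _ _ ENNReal.ofReal_ne_top]
        exact lintegral_congr fun m => by ring
    _ = ENNReal.ofReal (DcHNLS α β δ ^ (j + 1)) *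
          ∫⁻ σ in tauGammaOne α β δ '' Set.Ioi lam,
            ENNReal.ofReal ((1 + σ ^ 2) ^ (((j : ℝ) + 1) / 3) * ‖h σ‖ ^ 2) := by
        congr 1
        exact (lintegral_image_eq_lintegral_abs_deriv_mul' measurableSet_Ioi
          (fun x hx => (hHD x hx).hasDerivWithinAt) hmono.injOn
          (fun σ => ENNReal.ofReal ((1 + σ ^ 2) ^ (((j : ℝ) + 1) / 3) * ‖h σ‖ ^ 2))).symm
    _ ≤ ENNReal.ofReal (DcHNLS α β δ ^ (j + 1)) *
          ∫⁻ σ : ℝ, ENNReal.ofReal ((1 + σ ^ 2) ^ (((j : ℝ) + 1) / 3) * ‖h σ‖ ^ 2) :=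
        mul_le_mul_right (setLIntegral_le_lintegral _ _) _
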